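/- Let L be a positive integer, let x ∈ ℍ^L be fixed, and let f : ℍ^L → ℍ be the function f(w) = (Σ_{l} w_l·x_l)·(Σ_{l} x_l*·w_l*). Then for every index m and every point w ∈ ℍ^L, the m-th HR*-partial derivative of f at w equals (1/2)·(Σ_{l} w_l·x_l)·x_m*; that is, ∂(wᵀx·xᴴw*)/∂w_m* = (1/2)·(wᵀx)·x_m*. -/

import Mathlib

open Quaternion

/-- The imaginary unit `i` of the real quaternions. -/
def qI : ℍ[ℝ] := ⟨0, 1, 0, 0⟩

/-- The imaginary unit `j` of the real quaternions. -/
def qJ : ℍ[ℝ] := ⟨0, 0, 1, 0⟩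

/-- The imaginary unit `k` of the real quaternions. -/
def qK : ℍ[ℝ] := ⟨0, 0, 0, 1⟩

/-- The `m`-th HR*-partial derivative of `f : ℍ^L → ℍ` at `w`:
`(1/4) (D_{1,m} f(w) + (D_{i,m} f(w))·i + (D_{j,m} f(w))·j + (D_{k,m} f(w))·k)`,
where `D_{v,m} f(w)` is the real Fréchet derivative of `f` at `w` in direction `v·e_m`. -/
noncomputable def HRStarPartial {L : ℕ} (f : (Fin L → ℍ[ℝ]) → ℍ[ℝ]) (m : Fin L)
    (w : Fin L → ℍ[ℝ]) : ℍ[ℝ] :=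
  (4 : ℍ[ℝ])⁻¹ * (fderiv ℝ f w (Pi.single m 1) + fderiv ℝ f w (Pi.single m qI) * qI
    + fderiv ℝ f w (Pi.single m qJ) * qJ + fderiv ℝ f w (Pi.single m qK) * qK)

instance : StarModule ℝ ℍ[ℝ] := ⟨fun r q => by ext <;> simp⟩

/-- The continuous linear map `v ↦ ∑ l, v l * x l`. -/
noncomputable def GG {L : ℕ} (x : Fin L → ℍ[ℝ]) : (Fin L → ℍ[ℝ]) →L[ℝ] ℍ[ℝ] :=
  ∑ l, ((ContinuousLinearMap.mul ℝ ℍ[ℝ]).flip (x l)).comp (ContinuousLinearMap.proj l)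

lemma GG_apply {L : ℕ} (x v : Fin L → ℍ[ℝ]) : GG x v = ∑ l, v l * x l := by
  simp [GG]

lemma GG_single {L : ℕ} (x : Fin L → ℍ[ℝ]) (m : Fin L) (q : ℍ[ℝ]) :
    GG x (Pi.single m q) = q * x m := by
  rw [GG_apply, Finset.sum_eq_single m]
  · simp
  · intro l _ hl; simp [Pi.single_apply, hl]
  · simp

lemma two_ne_zero_q : (2 : ℍ[ℝ]) ≠ 0 := by
  have : ((2:ℝ) : ℍ[ℝ]) ≠ 0 := by
    simpa using (Quaternion.coe_injective.ne (a₁ := (2:ℝ)) (a₂ := 0) (by norm_num))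
  exact_mod_cast this

set_option maxHeartbeats 1000000 in
lemma keyh (a b : ℍ[ℝ]) :
    a * star (1 * b) + 1 * b * star a
      + (a * star (qI * b) + qI * b * star a) * qI
      + (a * star (qJ * b) + qJ * b * star a) * qJ
      + (a * star (qK * b) + qK * b * star a) * qK
      = a * star b + a * star b := by
  ext <;> simp [Quaternion.re_mul, Quaternion.imI_mul, Quaternion.imJ_mul, Quaternion.imK_mul] <;> simp [qI, qJ, qK] <;> ring

lemma key (a b : ℍ[ℝ]) :
    (4 : ℍ[ℝ])⁻¹ * (a * star (1 * b) + 1 * b * star a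
      + (a * star (qI * b) + qI * b * star a) * qI
      + (a * star (qJ * b) + qJ * b * star a) * qJ
      + (a * star (qK * b) + qK * b * star a) * qK)
      = (2 : ℍ[ℝ])⁻¹ * (a * star b) := by
  rw [keyh, ← two_mul, show (4 : ℍ[ℝ]) = 2 * 2 by norm_num, mul_inv_rev, mul_assoc,
    inv_mul_cancel_left₀ two_ne_zero_q]

/-- ∂(wᵀx·xᴴw*)/∂w_m* = (1/2)·(wᵀx)·x_m*. -/
theorem hr_star_partial_quadratic (L : ℕ) (hL : 0 < L) (x : Fin L → ℍ[ℝ])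
    (m : Fin L) (w : Fin L → ℍ[ℝ]) :
    HRStarPartial (fun v => (∑ l, v l * x l) * (∑ l, star (x l) * star (v l))) m w
      = (2 : ℍ[ℝ])⁻¹ * ((∑ l, w l * x l) * star (x m)) := by
  have hg : HasFDerivAt (fun v : Fin L → ℍ[ℝ] => ∑ l, v l * x l) (GG x) w := by
    have := (GG x).hasFDerivAt (x := w)
    have he : (⇑(GG x)) = fun v : Fin L → ℍ[ℝ] => ∑ l, v l * x l := by
      funext v; exact GG_apply x v
    rwa [he] at this
  have hmul := hg.mul' hg.star
  have hfe : (fun v : Fin L → ℍ[ℝ] => (∑ l, v l * x l) * (∑ l, star (x l) * star (v l)))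
      = (fun v : Fin L → ℍ[ℝ] => (∑ l, v l * x l) * star (∑ l, v l * x l)) := by
    funext v
    congr 1
    rw [star_sum]
    exact Finset.sum_congr rfl fun l _ => by rw [star_mul]
  rw [HRStarPartial, hfe, (show HasFDerivAt (fun v : Fin L → ℍ[ℝ] => (∑ l, v l * x l) * star (∑ l, v l * x l)) _ w from hmul).fderiv]
  simp only [ContinuousLinearMap.add_apply, ContinuousLinearMap.smul_apply,
    ContinuousLinearMap.smulRight_apply, ContinuousLinearMap.coe_comp', Function.comp_apply,
    ContinuousLinearEquiv.coe_coe, starL'_apply, GG_single, smul_eq_mul]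
  exact key (∑ l, w l * x l) (x m)
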